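/- (Construction of sub-solutions.) Let N ≥ 1, 0 ≤ m < 2, let a satisfy assumption (1.1) and let J satisfy assumption (1.4). Then, for every θ ∈ (0,1) and every z ∈ supp(a⁺) := {x : a⁺(x) ≠ 0}, there exist an open neighborhood V of z with V ⊂ supp(a⁺), a number ε_{z,θ} > 0, and a nonnegative function u ∈ C_c(ℝ^N) such that: supp(u) = V (set-theoretically, {x : u(x) ≠ 0} = V), u(z) ≥ (1 − θ) a⁺(z), u(x) < a⁺(x) for all x ∈ V, and u is a sub-solution of (KPP) for every 0 < ε < ε_{z,θ}, i.e. ε^{−m}(J_ε ∗ u − u)(x) + u(x)(a(x) − u(x)) ≥ 0 for all x ∈ ℝ^N. -/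

import Mathlib

open MeasureTheory Filter Metric Set

noncomputable section

open Real

abbrev Sp (N : ℕ) := EuclideanSpace ℝ (Fin N)

/-- The rescaled kernel `J_ε(z) = ε^{-N} J(z/ε)`. -/
def Jresc (N : ℕ) (J : Sp N → ℝ) (ε : ℝ) (z : Sp N) : ℝ := (1 / ε ^ N) * J (ε⁻¹ • z)

/-- The convolution `(J_ε ∗ u)(x)`. -/
def convJ (N : ℕ) (J : Sp N → ℝ) (ε : ℝ) (u : Sp N → ℝ) (x : Sp N) : ℝ :=
  ∫ y, Jresc N J ε (x - y) * u y

/-- `u` satisfies the nonlocal KPP equation at the point `x`: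
`ε^{-m} (J_ε ∗ u - u)(x) + u(x)(a(x) - u(x)) = 0`. -/
def kppEq (N : ℕ) (J a : Sp N → ℝ) (m ε : ℝ) (u : Sp N → ℝ) (x : Sp N) : Prop :=
  (1 / ε ^ m) * (convJ N J ε u x - u x) + u x * (a x - u x) = 0

/-- Assumption (1.1): `a` continuous, bounded, `a⁺ ≢ 0`, `limsup_{|x|→∞} a(x) < 0`. -/
def assumpA (N : ℕ) (a : Sp N → ℝ) : Prop :=
  Continuous a ∧ (∃ C, ∀ x, |a x| ≤ C) ∧ (∃ x, 0 < a x) ∧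
    (∃ R δ : ℝ, 0 < δ ∧ ∀ x : Sp N, R ≤ ‖x‖ → a x ≤ -δ)

/-- Assumption (1.4): `J ∈ L¹` nonnegative, radially symmetric, with unit mass and
finite `m`-th order moment. -/
def assumpJ (N : ℕ) (J : Sp N → ℝ) (m : ℝ) : Prop :=
  Integrable J ∧ (∀ x, 0 ≤ J x) ∧ (∀ x y : Sp N, ‖x‖ = ‖y‖ → J x = J y) ∧
    (∫ x, J x) = 1 ∧ Integrable (fun x => J x * ‖x‖ ^ m)


/-- 1-D bump profile: `g t = max (cos (min (l*|t|) π)) 0`. -/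
def gfun (l t : ℝ) : ℝ := max (Real.cos (min (l * |t|) π)) 0

lemma gfun_cont (l : ℝ) : Continuous (gfun l) := by
  unfold gfun
  fun_prop

lemma gfun_nonneg (l t : ℝ) : 0 ≤ gfun l t := le_max_right _ _

lemma gfun_le_one (l t : ℝ) : gfun l t ≤ 1 :=
  max_le (Real.cos_le_one _) zero_le_one

lemma gfun_zero (l : ℝ) : gfun l 0 = 1 := by
  simp [gfun, min_eq_left Real.pi_pos.le]

lemma gfun_ne_iff {l : ℝ} (hl : 0 < l) {t : ℝ} :
    gfun l t ≠ 0 ↔ |t| < π / (2 * l) := by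
  have h0 : 0 ≤ l * |t| := mul_nonneg hl.le (abs_nonneg t)
  constructor
  · intro h
    have hpos : 0 < Real.cos (min (l * |t|) π) := by
      rcases lt_or_ge 0 (Real.cos (min (l * |t|) π)) with h' | h'
      · exact h'
      · exact absurd (max_eq_right h') h
    by_contra hcon
    push_neg at hcon
    have h2 : π / 2 ≤ l * |t| := by
      rw [div_le_iff₀ (by positivity)] at hcon
      nlinarith [Real.pi_pos]
    have h3 : π / 2 ≤ min (l * |t|) π := le_min h2 (by linarith [Real.pi_pos])
    have h4 : Real.cos (min (l * |t|) π) ≤ 0 :=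
      Real.cos_nonpos_of_pi_div_two_le_of_le h3 (by
        have := min_le_right (l * |t|) π; linarith [Real.pi_pos])
    linarith
  · intro h
    have h2 : l * |t| < π / 2 := by
      rw [lt_div_iff₀ (by positivity : (0:ℝ) < 2 * l)] at h
      nlinarith
    have h3 : min (l * |t|) π = l * |t| := min_eq_left (by nlinarith [Real.pi_pos])
    have h4 : 0 < Real.cos (min (l * |t|) π) := by
      rw [h3]
      exact Real.cos_pos_of_mem_Ioo ⟨by nlinarith [Real.pi_pos], h2⟩
    have : gfun l t = Real.cos (min (l * |t|) π) := max_eq_left h4.le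
    rw [this]; exact ne_of_gt h4

lemma gfun_eq_of_lt {l : ℝ} (hl : 0 < l) {t : ℝ} (h : l * |t| < π) :
    gfun l t = max (Real.cos (l * t)) 0 := by
  unfold gfun
  rw [min_eq_left h.le, show l * |t| = |l * t| by rw [abs_mul, abs_of_pos hl], Real.cos_abs]

/-- The key 1-D inequality. -/
lemma gfun_key {l : ℝ} (hl : 0 < l) {t s : ℝ} (hs : l * |s| ≤ π / 2) :
    2 * gfun l t * Real.cos (l * s) ≤ gfun l (t - s) + gfun l (t + s) := by
  have hcs : 0 ≤ Real.cos (l * s) := by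
    apply Real.cos_nonneg_of_mem_Icc
    constructor
    · have : |l * s| ≤ π / 2 := by rwa [abs_mul, abs_of_pos hl]
      cases' abs_le.1 this with h1 h2; linarith
    · have : |l * s| ≤ π / 2 := by rwa [abs_mul, abs_of_pos hl]
      cases' abs_le.1 this with h1 h2; linarith
  rcases eq_or_ne (gfun l t) 0 with h0 | h0
  · rw [h0]
    simpa using add_nonneg (gfun_nonneg l (t - s)) (gfun_nonneg l (t + s))
  · have ht : |t| < π / (2 * l) := (gfun_ne_iff hl).1 h0
    have ht' : l * |t| < π / 2 := by
      rw [lt_div_iff₀ (by positivity : (0:ℝ) < 2 * l)] at ht; nlinarith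
    have hgt : gfun l t = Real.cos (l * t) := by
      rw [gfun_eq_of_lt hl (by linarith [Real.pi_pos])]
      apply max_eq_left
      apply Real.cos_nonneg_of_mem_Icc
      have := abs_le.1 (le_of_lt (show |l * t| < π / 2 by rwa [abs_mul, abs_of_pos hl]))
      exact ⟨by linarith [this.1], this.2⟩
    have hsub : Real.cos (l * (t - s)) ≤ gfun l (t - s) := by
      rw [gfun_eq_of_lt hl ?_]
      · exact le_max_left _ _
      · calc l * |t - s| ≤ l * (|t| + |s|) := by
              have := abs_sub (t) (s); nlinarith [abs_sub_abs_le_abs_sub t s, abs_sub t s]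
          _ = l * |t| + l * |s| := by ring
          _ < π := by linarith
    have hadd : Real.cos (l * (t + s)) ≤ gfun l (t + s) := by
      rw [gfun_eq_of_lt hl ?_]
      · exact le_max_left _ _
      · calc l * |t + s| ≤ l * (|t| + |s|) := by
              nlinarith [abs_add_le t s]
          _ = l * |t| + l * |s| := by ring
          _ < π := by linarith
    have hid : Real.cos (l * (t - s)) + Real.cos (l * (t + s))
        = 2 * Real.cos (l * t) * Real.cos (l * s) := by
      have e1 : l * (t - s) = l * t - l * s := by ring
      have e2 : l * (t + s) = l * t + l * s := by ring
      rw [e1, e2, Real.cos_sub, Real.cos_add]; ring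
    rw [hgt]
    linarith

/-- Weierstrass-type product bound. -/
lemma one_sub_sum_le_prod {ι : Type*} (s : Finset ι) (f : ι → ℝ)
    (h0 : ∀ i ∈ s, 0 ≤ f i) (h1 : ∀ i ∈ s, f i ≤ 1) :
    1 - ∑ i ∈ s, (1 - f i) ≤ ∏ i ∈ s, f i := by
  induction s using Finset.cons_induction with
  | empty => simp
  | cons a s ha ih =>
    rw [Finset.prod_cons, Finset.sum_cons]
    have hP := ih (fun i hi => h0 i (Finset.mem_cons.2 (Or.inr hi)))
      (fun i hi => h1 i (Finset.mem_cons.2 (Or.inr hi)))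
    have hPnn : 0 ≤ ∏ i ∈ s, f i :=
      Finset.prod_nonneg fun i hi => h0 i (Finset.mem_cons.2 (Or.inr hi))
    have hfa0 : 0 ≤ f a := h0 a (Finset.mem_cons_self a s)
    have hfa1 : f a ≤ 1 := h1 a (Finset.mem_cons_self a s)
    have hsum : 0 ≤ ∑ i ∈ s, (1 - f i) :=
      Finset.sum_nonneg fun i hi => by linarith [h1 i (Finset.mem_cons.2 (Or.inr hi))]
    nlinarith [mul_le_mul_of_nonneg_left hP hfa0]

def flipE (N : ℕ) (σ : Fin N → Bool) : Sp N ≃ₗᵢ[ℝ] Sp N :=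
  LinearIsometryEquiv.piLpCongrRight 2
    (fun i => if σ i then LinearIsometryEquiv.neg ℝ else LinearIsometryEquiv.refl ℝ ℝ)

lemma flipE_apply (N : ℕ) (σ : Fin N → Bool) (w : Sp N) (i : Fin N) :
    flipE N σ w i = if σ i then -(w i) else w i := by
  unfold flipE
  rw [LinearIsometryEquiv.piLpCongrRight_apply]
  rcases h : σ i with _ | _ <;> simp [h]

-- K1
lemma conv_eq (N : ℕ) (J : Sp N → ℝ) (ε : ℝ) (u : Sp N → ℝ) (x : Sp N) :
    convJ N J ε u x = ∫ w, Jresc N J ε w * u (x - w) := by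
  unfold convJ
  have h := (Measure.measurePreserving_sub_left (volume : Measure (Sp N)) x).integral_comp
    (MeasurableEquiv.measurableEmbedding (MeasurableEquiv.subLeft x))
    (fun y => Jresc N J ε (x - y) * u y)
  rw [← h]
  congr 1
  funext w
  simp [MeasurableEquiv.subLeft, sub_sub_cancel]

-- K2
lemma conv_flip (N : ℕ) (J : Sp N → ℝ) (hJrad : ∀ x y : Sp N, ‖x‖ = ‖y‖ → J x = J y)
    (ε : ℝ) (u : Sp N → ℝ) (x : Sp N) (σ : Fin N → Bool) :
    (∫ w, Jresc N J ε w * u (x - w)) = ∫ w, Jresc N J ε w * u (x - flipE N σ w) := by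
  have h := MeasureTheory.integral_comp (flipE N σ) (fun w => Jresc N J ε w * u (x - w))
  rw [← h]
  congr 1
  funext w
  have hn : Jresc N J ε (flipE N σ w) = Jresc N J ε w := by
    unfold Jresc
    congr 1
    apply hJrad
    rw [← (flipE N σ).map_smul]
    rw [(flipE N σ).norm_map]
  rw [hn]

-- K4 : scaling
lemma conv_scale (N : ℕ) (J : Sp N → ℝ) {ε : ℝ} (hε : 0 < ε) (Φ : Sp N → ℝ) :
    (∫ w, Jresc N J ε w * Φ w) = ∫ v, J v * Φ (ε • v) := by
  have h := Measure.integral_comp_inv_smul_of_nonneg (volume : Measure (Sp N))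
    (fun v => J v * Φ (ε • v)) hε.le
  simp only [finrank_euclideanSpace_fin] at h
  have heq : ∀ w : Sp N, (fun v => J v * Φ (ε • v)) (ε⁻¹ • w) = J (ε⁻¹ • w) * Φ w := by
    intro w
    simp only []
    rw [smul_smul, mul_inv_cancel₀ hε.ne', one_smul]
  simp only [heq] at h
  have : (∫ w : Sp N, Jresc N J ε w * Φ w) = ∫ w : Sp N, (1 / ε ^ N) * (J (ε⁻¹ • w) * Φ w) := by
    congr 1; funext w; unfold Jresc; ring
  rw [this, integral_const_mul, h, smul_eq_mul]
  rw [← mul_assoc]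
  rw [one_div, inv_mul_cancel₀ (by positivity), one_mul]

lemma coord_le_norm (N : ℕ) (w : Sp N) (i : Fin N) : |w i| ≤ ‖w‖ := by
  rw [EuclideanSpace.norm_eq, ← Real.sqrt_sq_eq_abs]
  apply Real.sqrt_le_sqrt
  have : (w i) ^ 2 = ‖w i‖ ^ 2 := by rw [Real.norm_eq_abs, sq_abs]
  rw [this]
  exact Finset.single_le_sum (f := fun j => ‖w j‖ ^ 2) (fun j _ => by positivity)
    (Finset.mem_univ i)

lemma norm_sq_eq (N : ℕ) (w : Sp N) : ∑ i, (w i) ^ 2 = ‖w‖ ^ 2 := by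
  rw [EuclideanSpace.norm_eq, Real.sq_sqrt (by positivity)]
  congr 1; funext i; rw [Real.norm_eq_abs, sq_abs]

lemma flip_bound (N : ℕ) {l δ ρ : ℝ} (hl : 0 < l) (hδ : 0 ≤ δ) (hρl : l * ρ ≤ 1)
    (z x : Sp N) (w : Sp N) (hw : ‖w‖ ≤ ρ) :
    (2:ℝ)^N * ((δ * ∏ i, gfun l (x i - z i)) * (1 - l^2 * ‖w‖^2 / 2)) ≤
      ∑ σ : Fin N → Bool, δ * ∏ i, gfun l ((x - flipE N σ w) i - z i) := by
  have hπ := Real.pi_gt_three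
  have hwi : ∀ i, l * |w i| ≤ 1 := by
    intro i
    calc l * |w i| ≤ l * ρ := by
          have h1 : |w i| ≤ ρ := (coord_le_norm N w i).trans hw
          nlinarith [abs_nonneg (w i)]
      _ ≤ 1 := hρl
  have hcosnn : ∀ i : Fin N, 0 ≤ Real.cos (l * w i) := by
    intro i
    apply Real.cos_nonneg_of_mem_Icc
    have h1 : |l * w i| ≤ 1 := by rw [abs_mul, abs_of_pos hl]; exact hwi i
    have := abs_le.1 h1
    constructor <;> [linarith [this.1]; linarith [this.2]]
  -- rewrite coordinates
  have hco : ∀ (σ : Fin N → Bool) (i : Fin N),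
      (x - flipE N σ w) i - z i = (x i - z i) - (if σ i then -(w i) else w i) := by
    intro σ i
    have : (x - flipE N σ w) i = x i - flipE N σ w i := rfl
    rw [this, flipE_apply]
    ring_nf
  -- factorize the sum
  have hfact : ∑ σ : Fin N → Bool, (∏ i, gfun l ((x - flipE N σ w) i - z i)) =
      ∏ i, (gfun l ((x i - z i) - (-(w i))) + gfun l ((x i - z i) - w i)) := by
    have h1 : ∀ σ : Fin N → Bool, (∏ i, gfun l ((x - flipE N σ w) i - z i)) =
        ∏ i, gfun l ((x i - z i) - (if σ i then -(w i) else w i)) := by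
      intro σ; exact Finset.prod_congr rfl fun i _ => by rw [hco σ i]
    rw [Finset.sum_congr rfl fun σ _ => h1 σ]
    rw [← Fintype.piFinset_univ, ← Finset.prod_univ_sum
      (fun _ => (Finset.univ : Finset Bool))
      (fun i b => gfun l ((x i - z i) - (if b then -(w i) else w i)))]
    exact Finset.prod_congr rfl fun i _ => by rw [Fintype.sum_bool]; simp
  -- per-coordinate lower bound
  have hcoord : ∀ i : Fin N,
      2 * gfun l (x i - z i) * Real.cos (l * w i) ≤
        gfun l ((x i - z i) - (-(w i))) + gfun l ((x i - z i) - w i) := by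
    intro i
    have h := gfun_key hl (t := x i - z i) (s := w i) (by nlinarith [hwi i])
    have e1 : (x i - z i) - (-(w i)) = (x i - z i) + w i := by ring
    rw [e1]
    linarith [h]
  -- products
  have hprod1 : ∏ i, (2 * gfun l (x i - z i) * Real.cos (l * w i)) ≤
      ∏ i, (gfun l ((x i - z i) - (-(w i))) + gfun l ((x i - z i) - w i)) := by
    apply Finset.prod_le_prod
    · intro i _
      have := gfun_nonneg l (x i - z i)
      have := hcosnn i
      positivity
    · intro i _; exact hcoord i
  have hprod2 : ∏ i, (2 * gfun l (x i - z i) * Real.cos (l * w i)) =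
      (2:ℝ)^N * (∏ i, gfun l (x i - z i)) * (∏ i, Real.cos (l * w i)) := by
    rw [Finset.prod_mul_distrib, Finset.prod_mul_distrib, Finset.prod_const]
    simp
  have hcosprod : 1 - l^2 * ‖w‖^2 / 2 ≤ ∏ i, Real.cos (l * w i) := by
    have h1 := one_sub_sum_le_prod Finset.univ (fun i => Real.cos (l * w i))
      (fun i _ => hcosnn i) (fun i _ => Real.cos_le_one _)
    have h2 : ∑ i, (1 - Real.cos (l * w i)) ≤ ∑ i, (l * w i)^2 / 2 := by
      apply Finset.sum_le_sum
      intro i _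
      have := Real.one_sub_sq_div_two_le_cos (x := l * w i)
      linarith
    have h3 : ∑ i, (l * w i)^2 / 2 = l^2 * ‖w‖^2 / 2 := by
      rw [← norm_sq_eq, Finset.mul_sum, Finset.sum_div]
      exact Finset.sum_congr rfl fun i _ => by ring
    simp only [] at h1
    linarith
  have hnnP : (0:ℝ) ≤ ∏ i, gfun l (x i - z i) :=
    Finset.prod_nonneg fun i _ => gfun_nonneg l _
  have main : (2:ℝ)^N * (∏ i, gfun l (x i - z i)) * (1 - l^2 * ‖w‖^2 / 2) ≤
      ∑ σ : Fin N → Bool, (∏ i, gfun l ((x - flipE N σ w) i - z i)) := by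
    rw [hfact]
    calc (2:ℝ)^N * (∏ i, gfun l (x i - z i)) * (1 - l^2 * ‖w‖^2 / 2)
        ≤ (2:ℝ)^N * (∏ i, gfun l (x i - z i)) * (∏ i, Real.cos (l * w i)) := by
          apply mul_le_mul_of_nonneg_left hcosprod
          positivity
      _ = ∏ i, (2 * gfun l (x i - z i) * Real.cos (l * w i)) := hprod2.symm
      _ ≤ _ := hprod1
  calc (2:ℝ)^N * ((δ * ∏ i, gfun l (x i - z i)) * (1 - l^2 * ‖w‖^2 / 2))
      = δ * ((2:ℝ)^N * (∏ i, gfun l (x i - z i)) * (1 - l^2 * ‖w‖^2 / 2)) := by ring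
    _ ≤ δ * ∑ σ : Fin N → Bool, (∏ i, gfun l ((x - flipE N σ w) i - z i)) :=
        mul_le_mul_of_nonneg_left main hδ
    _ = ∑ σ : Fin N → Bool, δ * ∏ i, gfun l ((x - flipE N σ w) i - z i) := by
        rw [Finset.mul_sum]

lemma sq_le_rpow {b ρ m : ℝ} (hb : 0 ≤ b) (hbρ : b ≤ ρ) (hρ : 0 ≤ ρ) (hm2 : m ≤ 2) :
    b ^ 2 ≤ ρ ^ (2 - m) * b ^ m := by
  rcases eq_or_lt_of_le hb with h0 | h0
  · have : b ^ 2 = 0 := by rw [← h0]; ring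
    rw [this]
    exact mul_nonneg (Real.rpow_nonneg hρ _) (Real.rpow_nonneg hb _)
  · have h1 : b ^ (2:ℝ) = b ^ ((2 - m) + m) := by norm_num
    have h2 : (b:ℝ) ^ (2:ℝ) = b ^ (2:ℕ) := by
      rw [← Real.rpow_natCast b 2]; norm_num
    rw [← h2, h1, Real.rpow_add h0]
    apply mul_le_mul_of_nonneg_right _ (Real.rpow_nonneg hb m)
    exact Real.rpow_le_rpow hb hbρ (by linarith)

lemma core_est (N : ℕ) (J : Sp N → ℝ) (hJint : Integrable J) (hJnn : ∀ v, 0 ≤ J v)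
    (hJrad : ∀ x y : Sp N, ‖x‖ = ‖y‖ → J x = J y) (hJmass : (∫ v, J v) = 1)
    (m : ℝ) (hm0 : 0 ≤ m) (hm2 : m < 2)
    (hJmom : Integrable (fun v : Sp N => J v * ‖v‖ ^ m))
    (u : Sp N → ℝ) (hu_cont : Continuous u) (hu_nn : ∀ y, 0 ≤ u y)
    {δ : ℝ} (hu_le : ∀ y, u y ≤ δ)
    {l ρ c ε : ℝ} (hl : 0 < l) (hρ : 0 < ρ) (hρl : l * ρ ≤ 1) (hc : 0 < c) (hε : 0 < ε)
    (hmom_bound : l ^ 2 / 2 * ρ ^ (2 - m) * (∫ v, J v * ‖v‖ ^ m) ≤ c / 2)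
    (htail : (∫ v in {v : Sp N | ρ < ε * ‖v‖}, J v * ‖v‖ ^ m) ≤ c / 2 * ρ ^ m)
    (x : Sp N)
    (hflip : ∀ w : Sp N, ‖w‖ ≤ ρ →
      (2:ℝ) ^ N * (u x * (1 - l ^ 2 * ‖w‖ ^ 2 / 2)) ≤
        ∑ σ : Fin N → Bool, u (x - flipE N σ w)) :
    u x * (1 - c * ε ^ m) ≤ convJ N J ε u x := by
  have hεm : (0:ℝ) < ε ^ m := Real.rpow_pos_of_pos hε m
  set Jre := fun w => Jresc N J ε w with hJre
  have hJre_nn : ∀ w, 0 ≤ Jre w := fun w => mul_nonneg (by positivity) (hJnn _)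
  have hJre_int : Integrable Jre := by
    have h1 : Integrable (fun w : Sp N => J (ε⁻¹ • w)) :=
      (MeasureTheory.integrable_comp_smul_iff volume J (inv_ne_zero hε.ne')).2 hJint
    exact h1.const_mul _
  set B := {w : Sp N | ‖w‖ ≤ ρ} with hBdef
  have hBmeas : MeasurableSet B := (isClosed_le continuous_norm continuous_const).measurableSet
  set Φ := B.indicator (fun w : Sp N => 1 - l ^ 2 * ‖w‖ ^ 2 / 2) with hΦ
  have hΦ_meas : Measurable Φ :=
    Measurable.indicator (by fun_prop) hBmeas
  have hΦB : ∀ w ∈ B, Φ w = 1 - l ^ 2 * ‖w‖ ^ 2 / 2 := fun w hw => by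
    rw [hΦ, Set.indicator_of_mem hw]
  have hΦ_bdd : ∀ w, |Φ w| ≤ 1 := by
    intro w
    rw [hΦ]
    by_cases hwB : w ∈ B
    · rw [Set.indicator_of_mem hwB]
      have h1 : ‖w‖ ≤ ρ := hwB
      have h15 : l * ‖w‖ ≤ 1 := le_trans (mul_le_mul_of_nonneg_left h1 hl.le) hρl
      have h2 : l ^ 2 * ‖w‖ ^ 2 ≤ 1 := by nlinarith [mul_nonneg hl.le (norm_nonneg w)]
      rw [abs_le]
      constructor <;> nlinarith [sq_nonneg (l * ‖w‖), norm_nonneg w]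
    · rw [Set.indicator_of_notMem hwB]; norm_num
  -- integrability of flip terms
  have hu_bd : ∀ σ : Fin N → Bool, Integrable (fun w => Jre w * u (x - flipE N σ w)) := by
    intro σ
    have haesm : AEStronglyMeasurable (fun w : Sp N => u (x - flipE N σ w)) volume :=
      (hu_cont.comp (continuous_const.sub (flipE N σ).continuous)).aestronglyMeasurable
    have h2 := Integrable.bdd_mul hJre_int haesm (Filter.Eventually.of_forall fun w => by
      rw [Real.norm_eq_abs, abs_of_nonneg (hu_nn _)]; exact hu_le _)
    have h3 : (fun w => u (x - flipE N σ w) * Jre w)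
        = fun w => Jre w * u (x - flipE N σ w) := by funext w; ring
    rwa [h3] at h2
  have hconvσ : ∀ σ, convJ N J ε u x = ∫ w, Jre w * u (x - flipE N σ w) := by
    intro σ
    rw [conv_eq]
    exact conv_flip N J hJrad ε u x σ
  have hsum_eq : (∫ w, ∑ σ : Fin N → Bool, Jre w * u (x - flipE N σ w))
      = (2:ℝ) ^ N * convJ N J ε u x := by
    rw [integral_finset_sum _ (fun σ _ => hu_bd σ)]
    rw [Finset.sum_congr rfl (fun σ _ => (hconvσ σ).symm)]
    rw [Finset.sum_const, Finset.card_univ]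
    simp [Fintype.card_fun]
  have hJΦ_int : Integrable (fun w => Jre w * Φ w) := by
    have h2 := Integrable.bdd_mul hJre_int hΦ_meas.aestronglyMeasurable
      (Filter.Eventually.of_forall fun w => by rw [Real.norm_eq_abs]; exact hΦ_bdd w)
    have h3 : (fun w => Φ w * Jre w) = fun w => Jre w * Φ w := by funext w; ring
    rwa [h3] at h2
  have hpt : ∀ w, (2:ℝ) ^ N * u x * (Jre w * Φ w)
      ≤ ∑ σ : Fin N → Bool, Jre w * u (x - flipE N σ w) := by
    intro w
    rw [← Finset.mul_sum]
    by_cases hwB : w ∈ B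
    · rw [hΦB w hwB]
      have h1 := hflip w hwB
      calc (2:ℝ) ^ N * u x * (Jre w * (1 - l ^ 2 * ‖w‖ ^ 2 / 2))
          = Jre w * ((2:ℝ) ^ N * (u x * (1 - l ^ 2 * ‖w‖ ^ 2 / 2))) := by ring
        _ ≤ Jre w * ∑ σ : Fin N → Bool, u (x - flipE N σ w) :=
            mul_le_mul_of_nonneg_left h1 (hJre_nn w)
    · rw [hΦ, Set.indicator_of_notMem hwB]
      have h1 : 0 ≤ Jre w * ∑ σ : Fin N → Bool, u (x - flipE N σ w) :=
        mul_nonneg (hJre_nn w) (Finset.sum_nonneg fun σ _ => hu_nn _)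
      nlinarith
  have hmono : (∫ w, (2:ℝ) ^ N * u x * (Jre w * Φ w))
      ≤ ∫ w, ∑ σ : Fin N → Bool, Jre w * u (x - flipE N σ w) :=
    integral_mono (hJΦ_int.const_mul _) (integrable_finset_sum _ (fun σ _ => hu_bd σ)) hpt
  have hkey1 : u x * (∫ w, Jre w * Φ w) ≤ convJ N J ε u x := by
    rw [integral_const_mul, hsum_eq] at hmono
    have h2 : (2:ℝ) ^ N * (u x * ∫ w, Jre w * Φ w) ≤ (2:ℝ) ^ N * convJ N J ε u x := by
      calc (2:ℝ) ^ N * (u x * ∫ w, Jre w * Φ w)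
          = (2:ℝ) ^ N * u x * ∫ w, Jre w * Φ w := by ring
        _ ≤ _ := hmono
    exact le_of_mul_le_mul_left h2 (by positivity)
  have hscale : (∫ w, Jre w * Φ w) = ∫ v, J v * Φ (ε • v) := conv_scale N J hε Φ
  -- the tail and moment estimates
  set A := {v : Sp N | ε * ‖v‖ ≤ ρ} with hA
  have hAmeas : MeasurableSet A :=
    (isClosed_le (continuous_const.mul continuous_norm) continuous_const).measurableSet
  set G := fun v : Sp N => J v * ‖v‖ ^ m with hG
  have hGnn : ∀ v, 0 ≤ G v := fun v =>
    mul_nonneg (hJnn v) (Real.rpow_nonneg (norm_nonneg v) m)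
  set C₁ := l ^ 2 / 2 * ρ ^ (2 - m) * ε ^ m with hC₁
  have hC₁nn : 0 ≤ C₁ := by
    apply mul_nonneg (mul_nonneg (by positivity) (Real.rpow_nonneg hρ.le _)) hεm.le
  set ind1 := A.indicator (fun v : Sp N => J v * (l ^ 2 * (ε * ‖v‖) ^ 2 / 2)) with hind1
  set ind2 := Aᶜ.indicator J with hind2
  have hnormsmul : ∀ v : Sp N, ‖ε • v‖ = ε * ‖v‖ := by
    intro v; rw [norm_smul, Real.norm_eq_abs, abs_of_pos hε]
  have hident : ∀ v, J v * Φ (ε • v) = J v - (ind1 v + ind2 v) := by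
    intro v
    by_cases hv : v ∈ A
    · have hvB : ε • v ∈ B := by
        rw [hBdef]; simp only [Set.mem_setOf_eq, hnormsmul v]; exact hv
      rw [hΦB _ hvB, hnormsmul v, hind1, hind2, Set.indicator_of_mem hv,
        Set.indicator_of_notMem (by simp [hv])]
      ring
    · have hvB : ε • v ∉ B := by
        rw [hBdef]; simp only [Set.mem_setOf_eq, hnormsmul v]
        rw [hA] at hv; simpa using hv
      rw [hΦ, Set.indicator_of_notMem hvB, hind1, hind2, Set.indicator_of_notMem hv,
        Set.indicator_of_mem (Set.mem_compl hv)]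
      ring
  have hind1_le : ∀ v, ind1 v ≤ C₁ * G v := by
    intro v
    rw [hind1]
    by_cases hv : v ∈ A
    · rw [Set.indicator_of_mem hv]
      have hb : (0:ℝ) ≤ ε * ‖v‖ := by positivity
      have hbρ : ε * ‖v‖ ≤ ρ := hv
      have h1 := sq_le_rpow hb hbρ hρ.le hm2.le
      have h2 : (ε * ‖v‖) ^ m = ε ^ m * ‖v‖ ^ m := Real.mul_rpow hε.le (norm_nonneg v)
      rw [h2] at h1
      have h3 := mul_le_mul_of_nonneg_left h1 (mul_nonneg (hJnn v) (by positivity : (0:ℝ) ≤ l^2/2))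
      calc J v * (l ^ 2 * (ε * ‖v‖) ^ 2 / 2) = J v * (l^2/2) * (ε * ‖v‖)^2 := by ring
        _ ≤ J v * (l^2/2) * (ρ ^ (2-m) * (ε ^ m * ‖v‖ ^ m)) := h3
        _ = C₁ * G v := by rw [hC₁, hG]; ring
    · rw [Set.indicator_of_notMem hv]
      exact mul_nonneg hC₁nn (hGnn v)
  have hind1_nn : ∀ v, 0 ≤ ind1 v := by
    intro v
    rw [hind1]
    by_cases hv : v ∈ A
    · rw [Set.indicator_of_mem hv]
      exact mul_nonneg (hJnn v) (by positivity)
    · rw [Set.indicator_of_notMem hv]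
  have hind1_int : Integrable ind1 := by
    apply Integrable.mono' (hJmom.const_mul C₁)
    · apply AEStronglyMeasurable.indicator _ hAmeas
      exact (hJint.aestronglyMeasurable.mul (Continuous.aestronglyMeasurable (by fun_prop)))
    · filter_upwards with v
      rw [Real.norm_eq_abs, abs_of_nonneg (hind1_nn v)]
      exact hind1_le v
  have hind2_int : Integrable ind2 := hJint.indicator hAmeas.compl
  have hJΦε_int : Integrable (fun v => J v * Φ (ε • v)) := by
    have haesm : AEStronglyMeasurable (fun v : Sp N => Φ (ε • v)) volume :=
      (hΦ_meas.comp (measurable_const_smul ε)).aestronglyMeasurable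
    have h2 := Integrable.bdd_mul hJint haesm (Filter.Eventually.of_forall fun v => by
      rw [Real.norm_eq_abs]; exact hΦ_bdd _)
    have h3 : (fun v => Φ (ε • v) * J v) = fun v => J v * Φ (ε • v) := by funext v; ring
    rwa [h3] at h2
  have hsplit : (∫ v, J v * Φ (ε • v)) = 1 - ((∫ v, ind1 v) + ∫ v, ind2 v) := by
    have h1 : (fun v => J v * Φ (ε • v)) = fun v => J v - (ind1 v + ind2 v) := funext hident
    have hadd : Integrable (fun v => ind1 v + ind2 v) := hind1_int.add hind2_int
    rw [h1, integral_sub hJint hadd, integral_add hind1_int hind2_int, hJmass]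
  have hI1 : (∫ v, ind1 v) ≤ c / 2 * ε ^ m := by
    have h1 : (∫ v, ind1 v) ≤ ∫ v, C₁ * G v :=
      integral_mono hind1_int (hJmom.const_mul C₁) hind1_le
    rw [integral_const_mul] at h1
    have h2 : C₁ * (∫ v, G v) ≤ c / 2 * ε ^ m := by
      have h3 := mul_le_mul_of_nonneg_right hmom_bound hεm.le
      calc C₁ * (∫ v, G v) = l ^ 2 / 2 * ρ ^ (2-m) * (∫ v, G v) * ε ^ m := by
            rw [hC₁]; ring
        _ ≤ c / 2 * ε ^ m := h3
    exact h1.trans h2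
  have hI2 : (∫ v, ind2 v) ≤ c / 2 * ε ^ m := by
    rw [hind2, integral_indicator hAmeas.compl]
    have hsub : Aᶜ = {v : Sp N | ρ < ε * ‖v‖} := by
      rw [hA]; ext v; simp [not_le]
    have h1 : (∫ v in Aᶜ, J v) ≤ ∫ v in Aᶜ, (ε / ρ) ^ m * G v := by
      apply setIntegral_mono_on hJint.integrableOn
        ((hJmom.const_mul _).integrableOn) hAmeas.compl
      intro v hv
      have hv' : ρ < ε * ‖v‖ := by rw [hsub] at hv; exact hv
      have hb : 1 ≤ ε * ‖v‖ / ρ := (one_le_div hρ).2 hv'.le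
      have h2 : 1 ≤ (ε * ‖v‖ / ρ) ^ m := Real.one_le_rpow hb hm0
      have h3 : (ε * ‖v‖ / ρ) ^ m = (ε / ρ) ^ m * ‖v‖ ^ m := by
        rw [show ε * ‖v‖ / ρ = (ε / ρ) * ‖v‖ by ring]
        exact Real.mul_rpow (by positivity) (norm_nonneg v)
      rw [h3] at h2
      have h4 := mul_le_mul_of_nonneg_left h2 (hJnn v)
      rw [mul_one] at h4
      calc J v ≤ J v * ((ε / ρ) ^ m * ‖v‖ ^ m) := h4
        _ = (ε / ρ) ^ m * G v := by rw [hG]; ring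
    rw [integral_const_mul] at h1
    have h4 : (∫ v in Aᶜ, G v) ≤ c / 2 * ρ ^ m := by rw [hsub]; exact htail
    have h6 : (0:ℝ) ≤ (ε / ρ) ^ m := Real.rpow_nonneg (by positivity) m
    have h5 : (ε / ρ) ^ m * ρ ^ m = ε ^ m := by
      rw [← Real.mul_rpow (by positivity) hρ.le, div_mul_cancel₀ _ hρ.ne']
    calc (∫ v in Aᶜ, J v) ≤ (ε / ρ) ^ m * ∫ v in Aᶜ, G v := h1
      _ ≤ (ε / ρ) ^ m * (c / 2 * ρ ^ m) := mul_le_mul_of_nonneg_left h4 h6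
      _ = c / 2 * ((ε / ρ) ^ m * ρ ^ m) := by ring
      _ = c / 2 * ε ^ m := by rw [h5]
  have hfinal : 1 - c * ε ^ m ≤ ∫ v, J v * Φ (ε • v) := by
    rw [hsplit]; linarith
  calc u x * (1 - c * ε ^ m) ≤ u x * ∫ w, Jre w * Φ w := by
        rw [hscale]; exact mul_le_mul_of_nonneg_left hfinal (hu_nn x)
    _ ≤ convJ N J ε u x := hkey1

lemma tail_small (N : ℕ) (G : Sp N → ℝ) (hG : Integrable G) (hGnn : ∀ v, 0 ≤ G v)
    (T : ℝ) (hT : 0 < T) : ∃ n : ℕ, (∫ v in {v : Sp N | (n:ℝ) ≤ ‖v‖}, G v) ≤ T := by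
  have hmeas : ∀ n : ℕ, MeasurableSet {v : Sp N | (n:ℝ) ≤ ‖v‖} := fun n =>
    (isClosed_le continuous_const continuous_norm).measurableSet
  have hlim := tendsto_integral_of_dominated_convergence
    (F := fun (n : ℕ) (v : Sp N) => ({v : Sp N | (n:ℝ) ≤ ‖v‖}).indicator G v)
    (f := fun _ => (0:ℝ)) (bound := G)
    (fun n => hG.aestronglyMeasurable.indicator (hmeas n))
    hG
    (by
      intro n
      filter_upwards with v
      rw [Real.norm_eq_abs]
      by_cases hv : v ∈ {v : Sp N | (n:ℝ) ≤ ‖v‖}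
      · rw [Set.indicator_of_mem hv, abs_of_nonneg (hGnn v)]
      · rw [Set.indicator_of_notMem hv]
        simpa using hGnn v)
    (by
      filter_upwards with v
      apply tendsto_atTop_of_eventually_const (i₀ := ⌈‖v‖⌉₊ + 1)
      intro n hn
      apply Set.indicator_of_notMem
      simp only [mem_setOf_eq, not_le]
      calc ‖v‖ ≤ (⌈‖v‖⌉₊ : ℝ) := Nat.le_ceil _
        _ < n := by exact_mod_cast Nat.lt_of_lt_of_le (Nat.lt_succ_self _) hn)
  rw [integral_zero] at hlim
  obtain ⟨n, hn⟩ := (hlim.eventually (Iio_mem_nhds hT)).exists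
  refine ⟨n, ?_⟩
  rw [← integral_indicator (hmeas n)]
  exact hn.le

set_option maxHeartbeats 2000000 in
/-- **Lemma 3.1 (Construction of sub-solutions).** For every `θ ∈ (0,1)` and every
`z ∈ supp(a⁺)` there are a neighborhood `V ⊆ supp(a⁺)` of `z`, a number `ε_{z,θ} > 0` and a
nonnegative `u ∈ C_c(ℝ^N)` with `supp(u) = V`, `u(z) ≥ (1-θ) a⁺(z)`, `u < a⁺` on `V`, which is
a sub-solution of (KPP) for all `0 < ε < ε_{z,θ}`. -/
theorem statement6 (N : ℕ) (hN : 1 ≤ N) (m : ℝ) (hm0 : 0 ≤ m) (hm2 : m < 2)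
    (a J : Sp N → ℝ) (ha : assumpA N a) (hJ : assumpJ N J m)
    (θ : ℝ) (hθ0 : 0 < θ) (hθ1 : θ < 1) (z : Sp N) (hz : max (a z) 0 ≠ 0) :
    ∃ V : Set (Sp N), V ∈ nhds z ∧ V ⊆ {x : Sp N | max (a x) 0 ≠ 0} ∧
      ∃ εzθ > (0 : ℝ), ∃ u : Sp N → ℝ,
        Continuous u ∧ HasCompactSupport u ∧ (∀ x, 0 ≤ u x) ∧
        {x : Sp N | u x ≠ 0} = V ∧
        (1 - θ) * max (a z) 0 ≤ u z ∧
        (∀ x ∈ V, u x < max (a x) 0) ∧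
        (∀ ε : ℝ, 0 < ε → ε < εzθ → ∀ x : Sp N,
          0 ≤ (1 / ε ^ m) * (convJ N J ε u x - u x) + u x * (a x - u x)) := by
  obtain ⟨hacont, -, -, -⟩ := ha
  obtain ⟨hJint, hJnn, hJrad, hJmass, hJmom⟩ := hJ
  have haz : 0 < a z := by
    rcases le_or_gt (a z) 0 with h | h
    · exact absurd (max_eq_right h) hz
    · exact h
  have hmaxz : max (a z) 0 = a z := max_eq_left haz.le
  have hβα : (1 - θ / 2) * a z < a z := by nlinarith
  have hβpos : 0 < (1 - θ / 2) * a z := by nlinarith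
  have hopen : IsOpen {x : Sp N | (1 - θ / 2) * a z < a x} :=
    isOpen_lt continuous_const hacont
  have hmem : {x : Sp N | (1 - θ / 2) * a z < a x} ∈ nhds z := hopen.mem_nhds hβα
  obtain ⟨r₂, hr₂, hball⟩ := Metric.mem_nhds_iff.1 hmem
  set r := r₂ / 2 with hrdef
  have hr : 0 < r := by positivity
  have hball' : ∀ x : Sp N, dist x z ≤ r → (1 - θ / 2) * a z < a x := by
    intro x hx
    exact hball (by rw [Metric.mem_ball]; rw [hrdef] at hx; linarith)
  have hNpos : (0:ℝ) < (N:ℝ) := by exact_mod_cast Nat.pos_of_ne_zero (by omega)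
  have hN0 : (0:ℝ) < Real.sqrt N := Real.sqrt_pos.2 hNpos
  set h₀ := r / Real.sqrt N with hh₀def
  have hh₀ : 0 < h₀ := by positivity
  set l := π / (2 * h₀) with hldef
  have hl : 0 < l := by rw [hldef]; positivity
  have hlh : π / (2 * l) = h₀ := by
    rw [hldef]
    field_simp
  set δ := (1 - θ) * a z with hδdef
  have hδ : 0 < δ := by rw [hδdef]; nlinarith
  set u := fun x : Sp N => δ * ∏ i, gfun l (x i - z i) with hu
  have hucont : Continuous u := by
    apply continuous_const.mul
    apply continuous_finset_prod
    intro i _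
    exact (gfun_cont l).comp ((PiLp.continuous_apply (p := 2) (β := fun _ : Fin N => ℝ) i).sub continuous_const)
  have huz : u z = δ := by
    simp [hu, gfun_zero]
  have hsupp : ∀ x : Sp N, u x ≠ 0 ↔ ∀ i, |x i - z i| < h₀ := by
    intro x
    rw [hu]
    rw [mul_ne_zero_iff]
    simp only [Finset.prod_ne_zero_iff]
    constructor
    · rintro ⟨-, h⟩ i
      rw [← hlh]
      exact (gfun_ne_iff hl).1 (h i (Finset.mem_univ i))
    · intro h
      exact ⟨ne_of_gt hδ, fun i _ => (gfun_ne_iff hl).2 (hlh ▸ h i)⟩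
  have hule : ∀ x, u x ≤ δ := by
    intro x
    show δ * ∏ i, gfun l (x i - z i) ≤ δ
    exact mul_le_of_le_one_right hδ.le (Finset.prod_le_one
      (fun i _ => gfun_nonneg l _) (fun i _ => gfun_le_one l _))
  have hunn : ∀ x, 0 ≤ u x := fun x => mul_nonneg hδ.le
    (Finset.prod_nonneg fun i _ => gfun_nonneg l _)
  have hnorm : ∀ x : Sp N, (∀ i, |x i - z i| < h₀) → dist x z ≤ r := by
    intro x hx
    rw [dist_eq_norm, EuclideanSpace.norm_eq]
    have hb : ∑ i, ‖(x - z) i‖ ^ 2 ≤ (N : ℝ) * h₀ ^ 2 := by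
      calc ∑ i, ‖(x - z) i‖ ^ 2 ≤ ∑ _i : Fin N, h₀ ^ 2 := by
            apply Finset.sum_le_sum
            intro i _
            have h2 : ‖(x - z) i‖ = |x i - z i| := by
              simp [PiLp.sub_apply, Real.norm_eq_abs]
            rw [h2]
            exact pow_le_pow_left₀ (abs_nonneg _) (hx i).le 2
        _ = (N : ℝ) * h₀ ^ 2 := by simp [Finset.sum_const]
    calc Real.sqrt (∑ i, ‖(x - z) i‖ ^ 2) ≤ Real.sqrt ((N : ℝ) * h₀ ^ 2) :=
          Real.sqrt_le_sqrt hb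
      _ = Real.sqrt N * h₀ := by
          rw [Real.sqrt_mul (by positivity), Real.sqrt_sq hh₀.le]
      _ = r := by
          rw [hh₀def]; field_simp
  have hcs : HasCompactSupport u := by
    have hsub : tsupport u ⊆ Metric.closedBall z r := by
      apply closure_minimal _ Metric.isClosed_closedBall
      intro x hx
      rw [Function.mem_support] at hx
      rw [Metric.mem_closedBall]
      exact hnorm x ((hsupp x).1 hx)
    exact IsCompact.of_isClosed_subset (isCompact_closedBall z r) (isClosed_tsupport u) hsub
  set V := {x : Sp N | u x ≠ 0} with hV
  have hVopen : IsOpen V := by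
    have : V = u ⁻¹' ({0}ᶜ) := rfl
    rw [this]
    exact IsOpen.preimage hucont isOpen_compl_singleton
  have hzV : z ∈ V := by
    rw [hV, mem_setOf_eq, huz]
    exact hδ.ne'
  have hVdist : ∀ x ∈ V, dist x z ≤ r := fun x hx => hnorm x ((hsupp x).1 hx)
  have hVa : ∀ x ∈ V, (1 - θ / 2) * a z < a x := fun x hx => hball' x (hVdist x hx)
  have hVapos : ∀ x ∈ V, 0 < a x := fun x hx => lt_trans hβpos (hVa x hx)
  set c := θ * a z / 2 with hcdef
  have hc : 0 < c := by
    rw [hcdef]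
    exact div_pos (mul_pos hθ0 haz) two_pos
  have hMnn : 0 ≤ ∫ v : Sp N, J v * ‖v‖ ^ m :=
    integral_nonneg fun v => mul_nonneg (hJnn v) (Real.rpow_nonneg (norm_nonneg v) m)
  have h2m : (0:ℝ) < 2 - m := by linarith
  set K := c / (2 * l ^ 2 * ((∫ v : Sp N, J v * ‖v‖ ^ m) + 1)) with hKdef
  have hlsq : (0:ℝ) < 2 * l ^ 2 * ((∫ v : Sp N, J v * ‖v‖ ^ m) + 1) :=
    mul_pos (mul_pos two_pos (pow_pos hl 2)) (by linarith)
  have hKpos : 0 < K := by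
    rw [hKdef]
    exact div_pos hc hlsq
  set ρ := min (1 / l) ((min 1 K) ^ (2 - m)⁻¹) with hρdef
  have hminK : (0:ℝ) < min 1 K := lt_min one_pos hKpos
  have hρ : 0 < ρ := lt_min (one_div_pos.2 hl) (Real.rpow_pos_of_pos hminK _)
  have hρl : l * ρ ≤ 1 := by
    calc l * ρ ≤ l * (1 / l) := mul_le_mul_of_nonneg_left (min_le_left _ _) hl.le
      _ = 1 := by field_simp
  have hρpow : ρ ^ (2 - m) ≤ K := by
    calc ρ ^ (2 - m) ≤ ((min 1 K) ^ (2 - m)⁻¹) ^ (2 - m) :=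
          Real.rpow_le_rpow hρ.le (min_le_right _ _) h2m.le
      _ = min 1 K := by
          rw [← Real.rpow_mul hminK.le]
          rw [inv_mul_cancel₀ h2m.ne', Real.rpow_one]
      _ ≤ K := min_le_right _ _
  have hmom_bound : l ^ 2 / 2 * ρ ^ (2 - m) * (∫ v : Sp N, J v * ‖v‖ ^ m) ≤ c / 2 := by
    have h1 : K * (2 * l ^ 2 * ((∫ v : Sp N, J v * ‖v‖ ^ m) + 1)) = c := by
      rw [hKdef]
      exact div_mul_cancel₀ _ (ne_of_gt hlsq)
    have h2 : l ^ 2 / 2 * ρ ^ (2 - m) * (∫ v : Sp N, J v * ‖v‖ ^ m)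
        ≤ l ^ 2 / 2 * K * (∫ v : Sp N, J v * ‖v‖ ^ m) :=
      mul_le_mul_of_nonneg_right (mul_le_mul_of_nonneg_left hρpow (by positivity)) hMnn
    nlinarith [sq_nonneg l, hKpos.le, hMnn, mul_nonneg (mul_nonneg hKpos.le (sq_nonneg l)) hMnn,
      mul_nonneg hKpos.le (sq_nonneg l)]
  obtain ⟨n₀, hn₀⟩ := tail_small N (fun v => J v * ‖v‖ ^ m) hJmom
    (fun v => mul_nonneg (hJnn v) (Real.rpow_nonneg (norm_nonneg v) m))
    (c / 2 * ρ ^ m) (mul_pos (half_pos hc) (Real.rpow_pos_of_pos hρ m))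
  set ε₀ := ρ / (n₀ + 1) with hε₀def
  have hε₀pos : 0 < ε₀ := by
    rw [hε₀def]
    exact div_pos hρ (by positivity)
  clear_value V u ε₀ ρ K c δ l h₀ r
  refine ⟨V, hVopen.mem_nhds hzV, ?_, ε₀, hε₀pos, u, hucont, hcs, hunn, hV.symm, ?_, ?_, ?_⟩
  · intro x hx
    have h1 := hVapos x hx
    simp only [mem_setOf_eq]
    exact ne_of_gt (lt_of_lt_of_le h1 (le_max_left _ _))
  · rw [hmaxz, huz, hδdef]
  · intro x hx
    calc u x ≤ δ := hule x
      _ < (1 - θ / 2) * a z := by rw [hδdef]; nlinarith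
      _ < a x := hVa x hx
      _ ≤ max (a x) 0 := le_max_left _ _
  · intro ε hε hεε₀ x
    have hεm : (0:ℝ) < ε ^ m := Real.rpow_pos_of_pos hε m
    by_cases hxV : u x = 0
    · rw [hxV, sub_zero, zero_mul, add_zero]
      have hconv : 0 ≤ convJ N J ε u x :=
        integral_nonneg fun y =>
          mul_nonneg (mul_nonneg (by positivity) (hJnn _)) (hunn y)
      exact mul_nonneg (by positivity) hconv
    · have hxV' : x ∈ V := by rw [hV]; exact hxV
      have hca : c ≤ a x - u x := by
        have h1 := hVa x hxV'
        have h2 := hule x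
        rw [hcdef]
        rw [hδdef] at h2
        nlinarith
      have htail : (∫ v in {v : Sp N | ρ < ε * ‖v‖}, J v * ‖v‖ ^ m) ≤ c / 2 * ρ ^ m := by
        refine le_trans ?_ hn₀
        apply setIntegral_mono_set hJmom.integrableOn
          (Filter.Eventually.of_forall fun v =>
            mul_nonneg (hJnn v) (Real.rpow_nonneg (norm_nonneg v) m))
        apply HasSubset.Subset.eventuallyLE
        intro v hv
        simp only [mem_setOf_eq] at hv ⊢
        have h1 : ρ / ε < ‖v‖ := by
          rw [div_lt_iff₀ hε]
          nlinarith
        have h2 : ε * ((n₀:ℝ) + 1) < ρ := by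
          have h3 : ε < ρ / ((n₀:ℝ) + 1) := by rw [hε₀def] at hεε₀; exact_mod_cast hεε₀
          rw [lt_div_iff₀ (by positivity)] at h3
          linarith
        have h4 : ((n₀:ℝ) + 1) < ρ / ε := by
          rw [lt_div_iff₀ hε]
          nlinarith
        linarith
      have hflip : ∀ w : Sp N, ‖w‖ ≤ ρ →
          (2:ℝ) ^ N * (u x * (1 - l ^ 2 * ‖w‖ ^ 2 / 2)) ≤
            ∑ σ : Fin N → Bool, u (x - flipE N σ w) := by
        intro w hw
        simp only [hu]
        exact flip_bound N hl hδ.le hρl z x w hw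
      have hkey := core_est N J hJint hJnn hJrad hJmass m hm0 hm2 hJmom u hucont hunn hule
        hl hρ hρl hc hε hmom_bound htail x hflip
      have h1 : -(c * u x) ≤ (1 / ε ^ m) * (convJ N J ε u x - u x) := by
        have h2 : -(c * ε ^ m * u x) ≤ convJ N J ε u x - u x := by nlinarith
        have h3 := mul_le_mul_of_nonneg_left h2 (le_of_lt (by positivity : (0:ℝ) < 1 / ε ^ m))
        have h4 : (1 / ε ^ m) * (-(c * ε ^ m * u x)) = -(c * u x) := by
          field_simp
        linarith [h4 ▸ h3]
      have h5 : u x * c ≤ u x * (a x - u x) := mul_le_mul_of_nonneg_left hca (hunn x)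
      linarith
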